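/- Fix σ₁, σ₂ > 0 and α ∈ (0.5, 1). The function g(s) = Φ((σ₂/σ₁)Φ⁻¹(α) − s/σ₁) − Φ(−(σ₂/σ₁)Φ⁻¹(α) − s/σ₁) is strictly decreasing in s for s > 0, and g(s) → 0 as s → ∞. -/

import Mathlib

open MeasureTheory ProbabilityTheory Filter

/-- Standard normal CDF. -/
noncomputable def Phi (t : ℝ) : ℝ := ((gaussianReal 0 1) (Set.Iic t)).toReal

/-- Standard normal quantile function. -/
noncomputable def PhiInv (p : ℝ) : ℝ := sInf {t : ℝ | p ≤ Phi t}

open Set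

noncomputable def stdPdf : ℝ → ℝ := gaussianPDFReal 0 1

lemma stdPdf_cont : Continuous stdPdf := by
  unfold stdPdf
  rw [gaussianPDFReal_def]
  fun_prop

lemma stdPdf_pos (x : ℝ) : 0 < stdPdf x :=
  gaussianPDFReal_pos 0 1 x one_ne_zero

lemma stdPdf_int : Integrable stdPdf := integrable_gaussianPDFReal 0 1

lemma Phi_eq (t : ℝ) : Phi t = ∫ x in Iic t, stdPdf x := by
  rw [Phi, gaussianReal_apply_eq_integral 0 one_ne_zero]
  rw [show (fun x => gaussianPDFReal 0 1 x) = stdPdf from rfl]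
  exact ENNReal.toReal_ofReal (integral_nonneg fun x => (stdPdf_pos x).le)

lemma Phi_sub (a b : ℝ) : Phi b - Phi a = ∫ x in a..b, stdPdf x := by
  rw [Phi_eq, Phi_eq]
  exact intervalIntegral.integral_Iic_sub_Iic stdPdf_int.integrableOn stdPdf_int.integrableOn

lemma Phi_hasDerivAt (t : ℝ) : HasDerivAt Phi (stdPdf t) t := by
  have h : HasDerivAt (fun u => ∫ x in (0:ℝ)..u, stdPdf x) (stdPdf t) t :=
    intervalIntegral.integral_hasDerivAt_right stdPdf_int.intervalIntegrable
      stdPdf_int.1.stronglyMeasurableAtFilter stdPdf_cont.continuousAt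
  have : Phi = fun u => Phi 0 + ∫ x in (0:ℝ)..u, stdPdf x := by
    funext u; rw [← Phi_sub]; ring
  rw [this]
  exact h.const_add _

lemma Phi_mono : StrictMono Phi := by
  intro a b hab
  have : 0 < ∫ x in a..b, stdPdf x :=
    intervalIntegral.intervalIntegral_pos_of_pos stdPdf_int.intervalIntegrable stdPdf_pos hab
  linarith [Phi_sub a b]

lemma Phi_zero : Phi 0 = 1/2 := by
  have heven : ∀ x : ℝ, stdPdf (-x) = stdPdf x := by
    intro x; unfold stdPdf gaussianPDFReal; norm_num
  have h1 : (∫ x in Iic (0:ℝ), stdPdf x) + ∫ x in Ioi (0:ℝ), stdPdf x = 1 := by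
    rw [intervalIntegral.integral_Iic_add_Ioi stdPdf_int.integrableOn stdPdf_int.integrableOn]
    exact integral_gaussianPDFReal_eq_one 0 one_ne_zero
  have h2 : (∫ x in Iic (0:ℝ), stdPdf x) = ∫ x in Ioi (0:ℝ), stdPdf x := by
    calc (∫ x in Iic (0:ℝ), stdPdf x) = ∫ x in Iic (0:ℝ), stdPdf (-x) := by
          simp_rw [heven]
      _ = ∫ x in Ioi (-(0:ℝ)), stdPdf x := integral_comp_neg_Iic 0 stdPdf
      _ = _ := by norm_num
  rw [Phi_eq]; linarith

lemma Phi_tendsto_atTop : Tendsto Phi atTop (nhds 1) := by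
  have h := tendsto_measure_Iic_atTop (gaussianReal 0 1)
  simp only [measure_univ] at h
  have := (ENNReal.tendsto_toReal ENNReal.one_ne_top).comp h
  exact (by simpa [Function.comp_def] using this :
    Tendsto (fun x => ((gaussianReal 0 1) (Iic x)).toReal) atTop (nhds 1))

lemma Phi_tendsto_atBot : Tendsto Phi atBot (nhds 0) := by
  have h := tendsto_measure_Ici_atBot (gaussianReal 0 1)
  simp only [measure_univ] at h
  have h' := (ENNReal.tendsto_toReal ENNReal.one_ne_top).comp h
  have key : ∀ t : ℝ, Phi t = 1 - ((gaussianReal 0 1) (Ici t)).toReal := by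
    intro t
    have hpt : (gaussianReal 0 1) {t} = 0 :=
      gaussianReal_absolutelyContinuous 0 one_ne_zero (measure_singleton t)
    have : (gaussianReal 0 1) (Iic t) + (gaussianReal 0 1) (Ici t)
        = 1 + (gaussianReal 0 1) {t} := by
      rw [← measure_union_add_inter (Iic t) measurableSet_Ici]
      have h1 : Iic t ∪ Ici t = univ := Iic_union_Ici
      have h2 : Iic t ∩ Ici t = {t} := by rw [Iic_inter_Ici, Icc_self]
      rw [h1, h2, measure_univ]
    rw [hpt, add_zero] at this
    have hfin : (gaussianReal 0 1) (Ici t) ≠ ⊤ := measure_ne_top _ _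
    have hfin' : (gaussianReal 0 1) (Iic t) ≠ ⊤ := measure_ne_top _ _
    rw [Phi]
    have := congrArg ENNReal.toReal this
    rw [ENNReal.toReal_add hfin' hfin] at this
    have h1le : ((gaussianReal 0 1) (Ici t)).toReal ≤ 1 := by
      simpa using ENNReal.toReal_mono ENNReal.one_ne_top
        (prob_le_one (μ := gaussianReal 0 1) (s := Ici t))
    simp only [ENNReal.toReal_one] at this
    linarith
  rw [funext key]
  have : Tendsto (fun t : ℝ => 1 - ((gaussianReal 0 1) (Ici t)).toReal) atBot
      (nhds (1 - 1)) := (tendsto_const_nhds.sub (by simpa [Function.comp_def] using h'))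
  simpa using this

lemma stdPdf_lt {x y : ℝ} (h : |y| < |x|) : stdPdf x < stdPdf y := by
  unfold stdPdf gaussianPDFReal
  simp only [sub_zero, NNReal.coe_one, mul_one]
  have hK : 0 < (Real.sqrt (2 * Real.pi))⁻¹ := by positivity
  apply mul_lt_mul_of_pos_left _ hK
  apply Real.exp_lt_exp.mpr
  have h2 : y ^ 2 < x ^ 2 := by
    have := abs_nonneg y
    nlinarith [sq_abs x, sq_abs y]
  linarith

lemma PhiInv_pos {α : ℝ} (hα : α ∈ Set.Ioo (1 / 2 : ℝ) 1) : 0 < PhiInv α := by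
  obtain ⟨hα1, hα2⟩ := hα
  have hne : {t : ℝ | α ≤ Phi t}.Nonempty := by
    have := (Phi_tendsto_atTop.eventually (eventually_ge_nhds hα2)).exists
    exact this
  have hcont : ContinuousAt Phi 0 := (Phi_hasDerivAt 0).continuousAt
  have hlt : Phi 0 < α := by rw [Phi_zero]; exact hα1
  have hev : ∀ᶠ t in nhds (0:ℝ), Phi t < α := hcont.eventually (eventually_lt_nhds hlt)
  obtain ⟨δ, hδ, hδ0⟩ := ((hev.filter_mono nhdsWithin_le_nhds).and self_mem_nhdsWithin).exists
    (f := nhdsWithin (0:ℝ) (Ioi 0))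
  refine lt_of_lt_of_le hδ0 (le_csInf hne fun t ht => ?_)
  by_contra hlt'
  push_neg at hlt'
  exact absurd ht (by simpa using lt_of_le_of_lt (Phi_mono.monotone hlt'.le) hδ)

theorem stmt9 (σ₁ σ₂ : ℝ) (hσ₁ : 0 < σ₁) (hσ₂ : 0 < σ₂)
    (α : ℝ) (hα : α ∈ Set.Ioo (1 / 2 : ℝ) 1)
    (g : ℝ → ℝ)
    (hg : g = fun s => Phi ((σ₂ / σ₁) * PhiInv α - s / σ₁) -
      Phi (-(σ₂ / σ₁) * PhiInv α - s / σ₁)) :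
    StrictAntiOn g (Set.Ioi 0) ∧ Tendsto g atTop (nhds 0) := by
  set c : ℝ := (σ₂ / σ₁) * PhiInv α with hcdef
  have hc : 0 < c := mul_pos (div_pos hσ₂ hσ₁) (PhiInv_pos hα)
  have hneg : ∀ s : ℝ, -(σ₂ / σ₁) * PhiInv α - s / σ₁ = -c - s / σ₁ := by
    intro s; rw [hcdef]; ring
  have hgc : g = fun s => Phi (c - s / σ₁) - Phi (-c - s / σ₁) := by
    rw [hg]; funext s; rw [hneg]
  have hlin : ∀ (a s : ℝ), HasDerivAt (fun u : ℝ => a - u / σ₁) (-(1/σ₁)) s := by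
    intro a s
    simpa using ((hasDerivAt_id s).div_const σ₁).const_sub a
  have hD : ∀ s : ℝ, HasDerivAt g
      (stdPdf (c - s / σ₁) * (-(1/σ₁)) - stdPdf (-c - s / σ₁) * (-(1/σ₁))) s := by
    intro s
    rw [hgc]
    exact ((Phi_hasDerivAt _).comp s (hlin c s)).sub
      ((Phi_hasDerivAt _).comp s (hlin (-c) s))
  have hcontg : Continuous g := by
    have : Differentiable ℝ g := fun s => (hD s).differentiableAt
    exact this.continuous
  constructor
  · apply strictAntiOn_of_deriv_neg (convex_Ioi 0) hcontg.continuousOn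
    intro s hs
    rw [interior_Ioi] at hs
    rw [(hD s).deriv]
    have hs' : 0 < s / σ₁ := div_pos hs hσ₁
    have habs : |c - s / σ₁| < |-c - s / σ₁| := by
      rw [abs_of_neg (by linarith : -c - s / σ₁ < 0)]
      exact abs_lt.mpr ⟨by linarith, by linarith⟩
    have hpdf : stdPdf (-c - s / σ₁) < stdPdf (c - s / σ₁) := stdPdf_lt habs
    have h1σ : 0 < 1 / σ₁ := by positivity
    nlinarith
  · rw [hgc]
    have hdiv : Tendsto (fun s : ℝ => s / σ₁) atTop atTop :=
      tendsto_id.atTop_div_const hσ₁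
    have hbot : ∀ a : ℝ, Tendsto (fun s : ℝ => a - s / σ₁) atTop atBot := by
      intro a
      simp only [sub_eq_add_neg]
      exact tendsto_atBot_add_const_left _ a (tendsto_neg_atTop_atBot.comp hdiv)
    have := (Phi_tendsto_atBot.comp (hbot c)).sub (Phi_tendsto_atBot.comp (hbot (-c)))
    simpa using this
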